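/- Under the same hypotheses, if g₁ ∼ g₂ (i.e. V'_{g₁} ≅ V'_{g₂}), then V''_{g₁} ≅ V''_{g₂}. Hence the partition of G into substrata (fibers of g ↦ V'_g up to isomorphism) refines the partition of G into strata (fibers of g ↦ V''_g up to isomorphism). -/

import Mathlib

open Module

/-- The rational group algebra of `W`. -/
abbrev GA (W : Type) [Group W] : Type := MonoidAlgebra ℚ W

/-- A finite-dimensional representation of `W` over `ℚ`, viewed as a module
over the group algebra `ℚ[W]`. -/
structure RepQ (W : Type) [Group W] where
  carrier : Type
  [ab : AddCommGroup carrier]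
  [modQ : Module ℚ carrier]
  [modA : Module (GA W) carrier]
  [tower : IsScalarTower ℚ (GA W) carrier]
  [fd : FiniteDimensional ℚ carrier]

attribute [instance] RepQ.ab RepQ.modQ RepQ.modA RepQ.tower RepQ.fd

variable {W : Type} [Group W]

/-- Isomorphism of representations. -/
def RepQ.Iso (V₁ V₂ : RepQ W) : Prop :=
  Nonempty (V₁.carrier ≃ₗ[GA W] V₂.carrier)

/-- `E` is irreducible. -/
def RepQ.IsIrr (E : RepQ W) : Prop := IsSimpleModule (GA W) E.carrier

/-- `E` occurs in `M`, i.e. `E` is isomorphic to a submodule of `M`. -/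
def Occ (A : Type) [Ring A] (E M : Type) [AddCommGroup E] [Module A E]
    [AddCommGroup M] [Module A M] : Prop :=
  ∃ S : Submodule A M, Nonempty (E ≃ₗ[A] ↥S)

/-- `E` occurs with multiplicity one in `M` (for semisimple modules over `ℚ[W]`
this is equivalent to: there is exactly one submodule of `M` isomorphic to `E`). -/
def OccMultOne (A : Type) [Ring A] (E M : Type) [AddCommGroup E] [Module A E]
    [AddCommGroup M] [Module A M] : Prop :=
  Occ A E M ∧ ∀ S₁ S₂ : Submodule A M,
    Nonempty (E ≃ₗ[A] ↥S₁) → Nonempty (E ≃ₗ[A] ↥S₂) → S₁ = S₂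

/-- If `V'_[g₁] ≅ V'_[g₂]` then `V''_[g₁] ≅ V''_[g₂]`: the partition into
substrata refines the partition into strata. -/
theorem substrata_refine_strata (G : Type) (nu : ℕ) (b : G → ℕ) (hb : ∀ g, b g ≤ nu)
    (V : G → RepQ W) (V' : ∀ g, Submodule (GA W) (V g).carrier)
    (htop : ∀ g, b g = nu → V' g = ⊤)
    (hrec : ∀ g, b g < nu → V' g = sSup {S : Submodule (GA W) (V g).carrier |
      IsSimpleModule (GA W) ↥S ∧ ∀ g', b g < b g' → ¬ Occ (GA W) ↥S ↥(V' g')})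
    (n : RepQ W → ℕ) (hn : ∀ E F : RepQ W, E.Iso F → n E = n F)
    (V'' : G → RepQ W) (hirr : ∀ g, (V'' g).IsIrr)
    (hmult : ∀ g, OccMultOne (GA W) (V'' g).carrier (V g).carrier)
    (hnb : ∀ g, n (V'' g) = b g)
    (hother : ∀ g (E : RepQ W), E.IsIrr → Occ (GA W) E.carrier (V g).carrier →
      ¬ E.Iso (V'' g) → n E > b g) :
    ∀ g₁ g₂ : G, Nonempty (↥(V' g₁) ≃ₗ[GA W] ↥(V' g₂)) → (V'' g₁).Iso (V'' g₂) := by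
  -- Step 1: V'' g occurs in V' g.
  have key : ∀ g : G, ∃ S : Submodule (GA W) (V g).carrier,
      Nonempty ((V'' g).carrier ≃ₗ[GA W] ↥S) ∧ S ≤ V' g := by
    intro g
    obtain ⟨S₀, ⟨e⟩⟩ := (hmult g).1
    refine ⟨S₀, ⟨e⟩, ?_⟩
    rcases eq_or_lt_of_le (hb g) with heq | hlt
    · rw [htop g heq]; exact le_top
    · rw [hrec g hlt]
      apply le_sSup
      constructor
      · haveI : IsSimpleModule (GA W) (V'' g).carrier := hirr g
        exact IsSimpleModule.congr e.symm
      · intro g' hbb ⟨T, ⟨f⟩⟩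
        have hocc : Occ (GA W) (V'' g).carrier (V g').carrier := by
          refine ⟨Submodule.map (V' g').subtype T, ⟨?_⟩⟩
          exact (e.trans f).trans
            (Submodule.equivMapOfInjective (V' g').subtype
              (Submodule.injective_subtype _) T)
        by_cases hiso : (V'' g).Iso (V'' g')
        · have := hn _ _ hiso
          rw [hnb, hnb] at this
          omega
        · have := hother g' (V'' g) (hirr g) hocc hiso
          rw [hnb] at this
          omega
  intro g₁ g₂ ⟨φ⟩
  -- V'' g₁ occurs in V g₂, and V'' g₂ occurs in V g₁.
  have occ12 : Occ (GA W) (V'' g₁).carrier (V g₂).carrier := by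
    obtain ⟨S, ⟨e⟩, hle⟩ := key g₁
    refine ⟨Submodule.map (V' g₂).subtype
      (Submodule.map φ.toLinearMap (Submodule.comap (V' g₁).subtype S)), ⟨?_⟩⟩
    exact ((e.trans (Submodule.comapSubtypeEquivOfLe hle).symm).trans
      (φ.submoduleMap _)).trans
      (Submodule.equivMapOfInjective (V' g₂).subtype
        (Submodule.injective_subtype _) _)
  have occ21 : Occ (GA W) (V'' g₂).carrier (V g₁).carrier := by
    obtain ⟨S, ⟨e⟩, hle⟩ := key g₂
    refine ⟨Submodule.map (V' g₁).subtype
      (Submodule.map φ.symm.toLinearMap (Submodule.comap (V' g₂).subtype S)), ⟨?_⟩⟩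
    exact ((e.trans (Submodule.comapSubtypeEquivOfLe hle).symm).trans
      (φ.symm.submoduleMap _)).trans
      (Submodule.equivMapOfInjective (V' g₁).subtype
        (Submodule.injective_subtype _) _)
  by_contra hiso
  have h1 := hother g₂ (V'' g₁) (hirr g₁) occ12 hiso
  have h2 := hother g₁ (V'' g₂) (hirr g₂) occ21 (fun ⟨f⟩ => hiso ⟨f.symm⟩)
  rw [hnb] at h1 h2
  omega
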